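/- Let ν > 0, let d ≥ 1 be an integer, and let m ≥ 1 be an integer. Define the half-space lattice sum I(d,ν,m) := Σ_{n > m} Σ_{q ∈ ℤ^{d−1}} (n² + |q|²)^{−ν−d/2}, where n ranges over integers greater than m and |·| is the Euclidean norm on ℝ^{d−1} (the inner sum over q is absent when d = 1). Then I(d,ν,m) ≤ β(d,ν)/m^{2ν}, where β(1,ν) = 1/(2ν) and β(d,ν) = (4 + 2/(2ν + d − 1)) β(d−1,ν) for d > 1. -/
import Mathlib


/-- The prefactor `β(d,ν)`: `β(1,ν) = 1/(2ν)` and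
`β(d,ν) = (4 + 2/(2ν+d−1)) β(d−1,ν)` for `d > 1`.  (The value at `d = 0` is unused.) -/
noncomputable def betaC (ν : ℝ) : ℕ → ℝ
  | 0 => 0
  | 1 => 1 / (2 * ν)
  | d + 2 => (4 + 2 / (2 * ν + (d : ℝ) + 1)) * betaC ν (d + 1)

/-- The half-space lattice sum
`I(d,ν,m) = Σ_{n>m} Σ_{q ∈ ℤ^{d−1}} (n² + |q|²)^{−ν−d/2}`. -/
noncomputable def Isum (d : ℕ) (ν : ℝ) (m : ℕ) : ℝ :=
  ∑' p : {n : ℤ // (m : ℤ) < n} × (Fin (d - 1) → ℤ),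
    ((p.1.1 : ℝ) ^ 2 + ∑ i, (p.2 i : ℝ) ^ 2) ^ (-(ν + (d : ℝ) / 2))

open Set intervalIntegral in
private lemma lem_tail (p c : ℝ) (hp : 0 < p) (hc : 1 ≤ c) :
    Summable (fun k : ℕ => (c + 1 + (k : ℝ)) ^ (-(p + 1))) ∧
    ∑' k : ℕ, (c + 1 + (k : ℝ)) ^ (-(p + 1)) ≤ c ^ (-p) / p := by
  have hc0 : (0:ℝ) < c := by linarith
  have hnn : ∀ k : ℕ, 0 ≤ (c + 1 + (k : ℝ)) ^ (-(p + 1)) := by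
    intro k; positivity
  have key : ∀ n : ℕ, ∑ i ∈ Finset.range n, (c + 1 + (i : ℝ)) ^ (-(p + 1)) ≤ c ^ (-p) / p := by
    intro n
    have hanti : AntitoneOn (fun x : ℝ => x ^ (-(p+1))) (Icc c (c + n)) := by
      intro x hx y hy hxy
      exact Real.rpow_le_rpow_of_nonpos (lt_of_lt_of_le hc0 hx.1) hxy (by linarith)
    have h1 := hanti.sum_le_integral
    have heq : ∀ i : ℕ, c + ((i : ℝ) + 1) = c + 1 + i := by intro i; ring
    have h2 : (∑ i ∈ Finset.range n, (c + 1 + (i : ℝ)) ^ (-(p + 1)))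
        ≤ ∫ x in c..(c + n), x ^ (-(p+1)) := by
      refine le_trans (le_of_eq ?_) h1
      refine Finset.sum_congr rfl fun i _ => ?_
      push_cast
      rw [heq]
    have h3 : ∫ x in c..(c + n), x ^ (-(p+1))
        = ((c + n) ^ (-p) - c ^ (-p)) / (-p) := by
      rw [integral_rpow (Or.inr ⟨by linarith, by
        rw [uIcc_of_le (by linarith)]
        intro h
        exact absurd h.1 (by push_neg; linarith)⟩)]
      norm_num
    rw [h3] at h2
    refine h2.trans ?_
    have h4 : (0:ℝ) ≤ (c + n) ^ (-p) := Real.rpow_nonneg (by positivity) _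
    have h5 : ((c + ↑n) ^ (-p) - c ^ (-p)) / (-p) = (c ^ (-p) - (c + ↑n) ^ (-p)) / p := by
      rw [div_neg, ← neg_div, neg_sub]
    rw [h5]
    gcongr
    linarith [h4]
  exact ⟨summable_of_sum_range_le hnn key, Real.tsum_le_of_sum_range_le hnn key⟩

open Set intervalIntegral in
private lemma lem_zsum (α A : ℝ) (hα : 1 ≤ α) (hA : 1 ≤ A) :
    Summable (fun k : ℤ => (A + (k : ℝ) ^ 2) ^ (-α)) ∧
    ∑' k : ℤ, (A + (k : ℝ) ^ 2) ^ (-α) ≤ (4 + 2 / (2 * α - 1)) * A ^ (1/2 - α) := by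
  have hA0 : (0:ℝ) < A := by linarith
  have hden : (0:ℝ) < 2 * α - 1 := by linarith
  set f : ℝ → ℝ := fun x => (A + x ^ 2) ^ (-α) with hf
  have hpos : ∀ x : ℝ, (0:ℝ) < A + x ^ 2 := fun x => by positivity
  have hcont : Continuous f := by
    apply Continuous.rpow_const (by continuity)
    intro x; exact Or.inl (ne_of_gt (hpos x))
  have hfnn : ∀ x, 0 ≤ f x := fun x => Real.rpow_nonneg (hpos x).le _
  set s : ℝ := Real.sqrt A with hs
  have hs1 : 1 ≤ s := by
    rw [hs, show (1:ℝ) = Real.sqrt 1 by simp]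
    exact Real.sqrt_le_sqrt hA
  have hs0 : 0 ≤ s := by linarith
  have hssq : s ^ 2 = A := Real.sq_sqrt hA0.le
  have hsrw : s = A ^ ((1:ℝ)/2) := by rw [hs, Real.sqrt_eq_rpow]
  set M : ℝ := A ^ (1/2 - α) + A ^ (1/2 - α) / (2 * α - 1) with hM
  -- antitone of f on nonneg interval
  have hanti : ∀ b : ℝ, AntitoneOn f (Icc 0 b) := by
    intro b x hx y hy hxy
    apply Real.rpow_le_rpow_of_nonpos (hpos x) _ (by linarith)
    nlinarith [hx.1]
  have key : ∀ n : ℕ, ∑ i ∈ Finset.range n, f (1 + (i:ℝ)) ≤ M := by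
    intro n
    have h1 : ∑ i ∈ Finset.range n, f (1 + (i:ℝ)) ≤ ∫ x in (0:ℝ)..(0 + n), f x := by
      refine le_trans (le_of_eq ?_) ((hanti _).sum_le_integral)
      refine Finset.sum_congr rfl fun i _ => ?_
      push_cast; ring_nf
    set B : ℝ := max (n:ℝ) s with hB
    have hnB : (n:ℝ) ≤ B := le_max_left _ _
    have hsB : s ≤ B := le_max_right _ _
    have hint : ∀ a b : ℝ, IntervalIntegrable f MeasureTheory.volume a b :=
      fun a b => hcont.intervalIntegrable a b
    have h2 : ∫ x in (0:ℝ)..(0 + n), f x ≤ ∫ x in (0:ℝ)..B, f x := by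
      rw [show ((0:ℝ)+n) = (n:ℝ) by ring,
        ← integral_add_adjacent_intervals (hint 0 (n:ℝ)) (hint (n:ℝ) B)]
      have : 0 ≤ ∫ x in (n:ℝ)..B, f x := integral_nonneg hnB (fun x _ => hfnn x)
      linarith
    have h3 : ∫ x in (0:ℝ)..B, f x = (∫ x in (0:ℝ)..s, f x) + ∫ x in s..B, f x :=
      (integral_add_adjacent_intervals (hint 0 s) (hint s B)).symm
    have h4 : ∫ x in (0:ℝ)..s, f x ≤ ∫ _x in (0:ℝ)..s, A ^ (-α) := by
      apply integral_mono_on hs0 (hint 0 s) (intervalIntegrable_const)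
      intro x hx
      apply Real.rpow_le_rpow_of_nonpos hA0 (by nlinarith [hx.1]) (by linarith)
    have h4' : ∫ _x in (0:ℝ)..s, (A:ℝ) ^ (-α) = A ^ (1/2 - α) := by
      rw [integral_const, smul_eq_mul, sub_zero, hsrw, ← Real.rpow_add hA0]
      norm_num [sub_eq_add_neg]
    -- second piece
    have hxb : ∀ x ∈ Icc s B, f x ≤ x ^ ((2:ℝ) * (-α)) := by
      intro x hx
      have hx0 : (0:ℝ) < x := lt_of_lt_of_le (by linarith) hx.1
      have : f x ≤ (x ^ 2) ^ (-α) := by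
        apply Real.rpow_le_rpow_of_nonpos (by positivity) (by linarith) (by linarith)
      refine this.trans (le_of_eq ?_)
      rw [Real.rpow_mul hx0.le, show ((2:ℝ)) = ((2:ℕ):ℝ) by norm_num, Real.rpow_natCast]
    have hgint : IntervalIntegrable (fun x : ℝ => x ^ ((2:ℝ) * (-α))) MeasureTheory.volume s B := by
      apply ContinuousOn.intervalIntegrable
      intro x hx
      have hx0 : (0:ℝ) < x := by
        rcases mem_uIcc.mp hx with h | h
        · linarith [h.1]
        · linarith [h.1, hsB]
      exact (Real.continuousAt_rpow_const x _ (Or.inl (ne_of_gt hx0))).continuousWithinAt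
    have h5 : ∫ x in s..B, f x ≤ ∫ x in s..B, x ^ ((2:ℝ) * (-α)) :=
      integral_mono_on hsB (hint s B) hgint hxb
    have h6 : ∫ x in s..B, x ^ ((2:ℝ) * (-α)) ≤ A ^ (1/2 - α) / (2 * α - 1) := by
      rw [integral_rpow (Or.inr ⟨by intro h; nlinarith, by
        rw [uIcc_of_le hsB]; intro h; linarith [h.1]⟩)]
      have hBnn : 0 ≤ B ^ ((2:ℝ) * (-α) + 1) := Real.rpow_nonneg (by linarith) _
      have hsA : s ^ ((2:ℝ) * (-α) + 1) = A ^ (1/2 - α) := by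
        rw [hsrw, ← Real.rpow_mul hA0.le]
        congr 1; ring
      have h2a : (2:ℝ) * (-α) + 1 = -(2*α - 1) := by ring
      rw [hsA, h2a, div_neg, ← neg_div, neg_sub]
      have hBnn' : (0:ℝ) ≤ B ^ (-(2*α-1)) := Real.rpow_nonneg (by linarith) _
      gcongr
      linarith
    calc ∑ i ∈ Finset.range n, f (1 + (i:ℝ)) ≤ ∫ x in (0:ℝ)..(0+n), f x := h1
      _ ≤ ∫ x in (0:ℝ)..B, f x := h2
      _ = (∫ x in (0:ℝ)..s, f x) + ∫ x in s..B, f x := h3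
      _ ≤ A ^ (1/2-α) + A ^ (1/2-α)/(2*α-1) := by
          have := h4.trans (le_of_eq h4')
          linarith [h5.trans h6]
  have hfn_nn : ∀ i : ℕ, 0 ≤ f (1 + (i:ℝ)) := fun i => hfnn _
  have hsum1 : Summable (fun i : ℕ => f (1 + (i:ℝ))) := summable_of_sum_range_le hfn_nn key
  have htsum1 : ∑' i : ℕ, f (1 + (i:ℝ)) ≤ M := Real.tsum_le_of_sum_range_le hfn_nn key
  set g : ℤ → ℝ := fun k => (A + (k:ℝ)^2) ^ (-α) with hg
  have e2 : ∀ n : ℕ, g (-((n:ℤ)+1)) = f (1 + (n:ℝ)) := by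
    intro n; simp only [hg, hf]; congr 2; push_cast; ring
  have hnat : Summable (fun n : ℕ => g (n:ℤ)) := by
    apply (summable_nat_add_iff 1).mp
    refine hsum1.congr fun n => ?_
    simp only [hg, hf]; congr 2; push_cast; ring
  have hneg : Summable (fun n : ℕ => g (-((n:ℤ)+1))) := hsum1.congr fun n => (e2 n).symm
  constructor
  · exact hnat.of_nat_of_neg_add_one hneg
  rw [tsum_of_nat_of_neg_add_one hnat hneg]
  have h7 : ∑' n:ℕ, g (n:ℤ) = g 0 + ∑' n:ℕ, g ((n+1:ℕ):ℤ) := Summable.tsum_eq_zero_add hnat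
  have h8 : ∑' n:ℕ, g ((n+1:ℕ):ℤ) = ∑' i:ℕ, f (1+(i:ℝ)) := by
    refine tsum_congr fun n => ?_
    simp only [hg, hf]; congr 2; push_cast; ring
  have h9 : ∑' n:ℕ, g (-((n:ℤ)+1)) = ∑' i:ℕ, f (1+(i:ℝ)) := tsum_congr e2
  have hg0 : g 0 ≤ A ^ (1/2 - α) := by
    have : g 0 = A ^ (-α) := by simp [hg]
    rw [this]
    exact Real.rpow_le_rpow_of_exponent_le hA (by linarith)
  have hAp : (0:ℝ) ≤ A ^ (1/2 - α) := Real.rpow_nonneg hA0.le _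
  have hdiv : (2/(2*α-1)) * A^(1/2-α) = 2 * (A^(1/2-α)/(2*α-1)) := by ring
  rw [h7, h8, h9]
  have hM2 : ∑' i:ℕ, f (1+(i:ℝ)) ≤ A ^ (1/2 - α) + A ^ (1/2 - α) / (2 * α - 1) := htsum1
  nlinarith [hM2, hg0, hAp, hdiv]


private lemma sq_rpow (y : ℝ) (hy : 0 ≤ y) (t : ℝ) : (y ^ 2) ^ t = y ^ (2 * t) := by
  rw [← Real.rpow_natCast y 2, ← Real.rpow_mul hy]
  norm_num

private lemma aux_main (ν : ℝ) (hν : 0 < ν) :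
    ∀ e : ℕ, ∀ m : ℕ, 1 ≤ m →
    Summable (fun p : {n : ℤ // (m : ℤ) < n} × (Fin e → ℤ) =>
      ((p.1.1 : ℝ) ^ 2 + ∑ i, (p.2 i : ℝ) ^ 2) ^ (-(ν + ((e + 1 : ℕ) : ℝ) / 2))) ∧
    (∑' p : {n : ℤ // (m : ℤ) < n} × (Fin e → ℤ),
      ((p.1.1 : ℝ) ^ 2 + ∑ i, (p.2 i : ℝ) ^ 2) ^ (-(ν + ((e + 1 : ℕ) : ℝ) / 2)))
      ≤ betaC ν (e + 1) / (m : ℝ) ^ (2 * ν) := by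
  intro e
  induction e with
  | zero =>
    intro m hm
    have hm1 : (1:ℝ) ≤ (m:ℝ) := by exact_mod_cast hm
    set F : {n : ℤ // (m : ℤ) < n} × (Fin 0 → ℤ) → ℝ := fun p =>
      ((p.1.1 : ℝ) ^ 2 + ∑ i, (p.2 i : ℝ) ^ 2) ^ (-(ν + ((0 + 1 : ℕ) : ℝ) / 2)) with hF
    let E : ℕ ≃ {n : ℤ // (m : ℤ) < n} × (Fin 0 → ℤ) :=
      { toFun := fun k => (⟨(m : ℤ) + 1 + k, by omega⟩, fun i => i.elim0)
        invFun := fun p => (p.1.1 - m - 1).toNat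
        left_inv := fun k => by
          show ((m : ℤ) + 1 + k - m - 1).toNat = k
          omega
        right_inv := fun p => by
          refine Prod.ext (Subtype.ext ?_) (Subsingleton.elim _ _)
          have := p.1.2
          simp only
          omega }
    have hcomp : ∀ k : ℕ, F (E k) = ((m:ℝ) + 1 + (k:ℝ)) ^ (-(2 * ν + 1)) := by
      intro k
      rw [hF]
      show ((((m : ℤ) + 1 + k : ℤ) : ℝ) ^ 2 + ∑ i : Fin 0, _) ^ _ = _
      rw [Finset.univ_eq_empty, Finset.sum_empty, add_zero]
      push_cast
      rw [sq_rpow _ (by positivity)]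
      congr 1
      push_cast
      ring
    obtain ⟨S, T⟩ := lem_tail (2 * ν) (m : ℝ) (by linarith) hm1
    have S' : Summable (F ∘ E) := S.congr fun k => (hcomp k).symm
    constructor
    · exact E.summable_iff.mp S'
    · rw [← E.tsum_eq]
      calc ∑' k : ℕ, F (E k) = ∑' k : ℕ, ((m:ℝ) + 1 + (k:ℝ)) ^ (-(2 * ν + 1)) :=
            tsum_congr hcomp
        _ ≤ (m:ℝ) ^ (-(2 * ν)) / (2 * ν) := T
        _ = betaC ν (0 + 1) / (m : ℝ) ^ (2 * ν) := by
            rw [Real.rpow_neg (by positivity)]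
            simp only [betaC]
            ring
  | succ e ih =>
    intro m hm
    obtain ⟨ihS, ihT⟩ := ih m hm
    set α : ℝ := ν + ((e + 1 + 1 : ℕ) : ℝ) / 2 with hα
    have he0 : (0:ℝ) ≤ (e : ℝ) := Nat.cast_nonneg e
    have hα1 : 1 ≤ α := by rw [hα]; push_cast; linarith
    have hden : 0 < 2 * α - 1 := by linarith
    set C : ℝ := 4 + 2 / (2 * α - 1) with hC
    have hCpos : 0 ≤ C := by
      have : 0 < 2 / (2 * α - 1) := by positivity
      rw [hC]; linarith
    set G : {n : ℤ // (m : ℤ) < n} × (Fin (e + 1) → ℤ) → ℝ := fun p =>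
      ((p.1.1 : ℝ) ^ 2 + ∑ i, (p.2 i : ℝ) ^ 2) ^ (-(ν + ((e + 1 + 1 : ℕ) : ℝ) / 2)) with hG
    set Fe : {n : ℤ // (m : ℤ) < n} × (Fin e → ℤ) → ℝ := fun p =>
      ((p.1.1 : ℝ) ^ 2 + ∑ i, (p.2 i : ℝ) ^ 2) ^ (-(ν + ((e + 1 : ℕ) : ℝ) / 2)) with hFe
    let Φ : ({n : ℤ // (m : ℤ) < n} × (Fin e → ℤ)) × ℤ ≃
        {n : ℤ // (m : ℤ) < n} × (Fin (e + 1) → ℤ) :=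
      { toFun := fun x => (x.1.1, Fin.cons x.2 x.1.2)
        invFun := fun y => ((y.1, fun i => y.2 i.succ), y.2 0)
        left_inv := fun x => by
          obtain ⟨⟨n, q⟩, k⟩ := x
          simp [Fin.cons_succ, Fin.cons_zero]
        right_inv := fun y => by
          obtain ⟨n, q⟩ := y
          exact Prod.ext rfl (Fin.cons_self_tail q) }
    have hN1 : ∀ p : {n : ℤ // (m : ℤ) < n} × (Fin e → ℤ),
        1 ≤ (p.1.1 : ℝ) ^ 2 + ∑ i, (p.2 i : ℝ) ^ 2 := by
      intro p
      have h1 : (2:ℤ) ≤ p.1.1 := by have := p.1.2; omega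
      have h1' : (2:ℝ) ≤ (p.1.1 : ℝ) := by exact_mod_cast h1
      have h2 : (0:ℝ) ≤ ∑ i, (p.2 i : ℝ) ^ 2 := Finset.sum_nonneg fun i _ => sq_nonneg _
      nlinarith
    have key1 : ∀ (p : {n : ℤ // (m : ℤ) < n} × (Fin e → ℤ)) (k : ℤ),
        G (Φ (p, k)) = (((p.1.1 : ℝ) ^ 2 + ∑ i, (p.2 i : ℝ) ^ 2) + (k:ℝ) ^ 2) ^ (-α) := by
      intro p k
      rw [hG]
      show ((p.1.1 : ℝ) ^ 2 + ∑ i : Fin (e+1), ((Fin.cons k p.2 : Fin (e+1) → ℤ) i : ℝ) ^ 2) ^ _ = _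
      rw [Fin.sum_univ_succ]
      simp only [Fin.cons_zero, Fin.cons_succ]
      congr 1
      ring
    have hz := fun p : {n : ℤ // (m : ℤ) < n} × (Fin e → ℤ) =>
      lem_zsum α ((p.1.1 : ℝ) ^ 2 + ∑ i, (p.2 i : ℝ) ^ 2) hα1 (hN1 p)
    have hexp : ∀ p : {n : ℤ // (m : ℤ) < n} × (Fin e → ℤ),
        ((p.1.1 : ℝ) ^ 2 + ∑ i, (p.2 i : ℝ) ^ 2) ^ ((1:ℝ)/2 - α) = Fe p := by
      intro p
      rw [hFe]
      congr 1
      rw [hα]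
      push_cast
      ring
    have hslice : ∀ p, Summable (fun k : ℤ => G (Φ (p, k))) := fun p =>
      (hz p).1.congr fun k => (key1 p k).symm
    have hbound : ∀ p, (∑' k : ℤ, G (Φ (p, k))) ≤ C * Fe p := by
      intro p
      rw [tsum_congr (key1 p)]
      calc _ ≤ C * ((p.1.1 : ℝ) ^ 2 + ∑ i, (p.2 i : ℝ) ^ 2) ^ ((1:ℝ)/2 - α) := by
            have := (hz p).2
            norm_num at this ⊢
            exact this
        _ = C * Fe p := by rw [hexp p]
    have hGnn : ∀ y, 0 ≤ G y := by
      intro y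
      rw [hG]
      have : (0:ℝ) ≤ (y.1.1 : ℝ) ^ 2 + ∑ i, (y.2 i : ℝ) ^ 2 := by positivity
      exact Real.rpow_nonneg this _
    have hslicesum : Summable (fun p => ∑' k : ℤ, G (Φ (p, k))) := by
      refine Summable.of_nonneg_of_le (fun p => tsum_nonneg fun k => hGnn _)
        (fun p => hbound p) (ihS.mul_left C)
    have hH : Summable (fun x : ({n : ℤ // (m : ℤ) < n} × (Fin e → ℤ)) × ℤ => G (Φ x)) := by
      rw [summable_prod_of_nonneg (fun x => hGnn _)]
      exact ⟨hslice, hslicesum⟩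
    have hbeta : betaC ν (e + 1 + 1) = C * betaC ν (e + 1) := by
      have h2α : 2 * α - 1 = 2 * ν + (e:ℝ) + 1 := by rw [hα]; push_cast; ring
      rw [hC, h2α]
      rfl
    constructor
    · exact Φ.summable_iff.mp hH
    · rw [← Φ.tsum_eq]
      calc ∑' x, G (Φ x) = ∑' p, ∑' k : ℤ, G (Φ (p, k)) := Summable.tsum_prod hH
        _ ≤ ∑' p, C * Fe p := Summable.tsum_le_tsum hbound hslicesum (ihS.mul_left C)
        _ = C * ∑' p, Fe p := tsum_mul_left
        _ ≤ C * (betaC ν (e + 1) / (m : ℝ) ^ (2 * ν)) := mul_le_mul_of_nonneg_left ihT hCpos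
        _ = betaC ν (e + 1 + 1) / (m : ℝ) ^ (2 * ν) := by rw [hbeta, mul_div_assoc]

theorem stmt_6 (ν : ℝ) (hν : 0 < ν) (d : ℕ) (hd : 1 ≤ d) (m : ℕ) (hm : 1 ≤ m) :
    Summable (fun p : {n : ℤ // (m : ℤ) < n} × (Fin (d - 1) → ℤ) =>
      ((p.1.1 : ℝ) ^ 2 + ∑ i, (p.2 i : ℝ) ^ 2) ^ (-(ν + (d : ℝ) / 2))) ∧
    Isum d ν m ≤ betaC ν d / (m : ℝ) ^ (2 * ν) := by
  obtain ⟨e, rfl⟩ : ∃ e, d = e + 1 := ⟨d - 1, by omega⟩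
  have h := aux_main ν hν e m hm
  exact ⟨h.1, by rw [Isum]; simpa using h.2⟩
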